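/- The discriminant of the polynomial t^5 + 65·t^4 − 870·t^3 − 18990·t^2 + 26325·t + 255069 equals 2^32 · 3^12 · 5^11 · 11^6. -/

import Mathlib

open Polynomial Finset

set_option maxHeartbeats 2000000 in
private lemma det_aux5 : (!![(5:ℂ), -65, 5965, -387305, 29024725;
         -65, 5965, -387305, 29024725, -2109851345;
         5965, -387305, 29024725, -2109851345, 154896477085;
         -387305, 29024725, -2109851345, 154896477085, -11343987835385;
         29024725, -2109851345, 154896477085, -11343987835385, 831387780935845]).det
      = 2 ^ 32 * 3 ^ 12 * 5 ^ 11 * 11 ^ 6 := by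
  simp [Matrix.det_succ_row_zero, Fin.sum_univ_succ, Fin.succAbove]; norm_num

theorem quintic_discriminant (r : Fin 5 → ℂ)
    (h : (X ^ 5 + C 65 * X ^ 4 - C 870 * X ^ 3 - C 18990 * X ^ 2 +
        C 26325 * X + C 255069 : ℂ[X]) = ∏ i, (X - C (r i))) :
    ∏ i, ∏ j ∈ Finset.univ.filter (fun j => i < j), (r i - r j) ^ 2 =
      2 ^ 32 * 3 ^ 12 * 5 ^ 11 * 11 ^ 6 := by
  have h0 := congrArg (Polynomial.eval (0:ℂ)) h
  have h1 := congrArg (Polynomial.eval (1:ℂ)) h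
  have hm1 := congrArg (Polynomial.eval (-1:ℂ)) h
  have h2 := congrArg (Polynomial.eval (2:ℂ)) h
  have hm2 := congrArg (Polynomial.eval (-2:ℂ)) h
  simp only [eval_add, eval_sub, eval_mul, eval_pow, eval_X, eval_C, eval_prod,
    Fin.prod_univ_five] at h0 h1 hm1 h2 hm2
  set a := r 0 with ha
  set b := r 1 with hb
  set c := r 2 with hc
  set d := r 3 with hd
  set e := r 4 with he
  have he1 : a + b + c + d + e = -65 := by
    linear_combination ((1:ℂ)/4) * h0 + ((-1:ℂ)/6) * h1 + ((-1:ℂ)/6) * hm1 + ((1:ℂ)/24) * h2 + ((1:ℂ)/24) * hm2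
  have he2 : a*b + a*c + a*d + a*e + b*c + b*d + b*e + c*d + c*e + d*e = -870 := by
    linear_combination ((1:ℂ)/6) * h1 + ((-1:ℂ)/6) * hm1 + ((-1:ℂ)/12) * h2 + ((1:ℂ)/12) * hm2
  have he3 : a*b*c + a*b*d + a*b*e + a*c*d + a*c*e + a*d*e + b*c*d + b*c*e + b*d*e + c*d*e = 18990 := by
    linear_combination ((-5:ℂ)/4) * h0 + ((2:ℂ)/3) * h1 + ((2:ℂ)/3) * hm1 + ((-1:ℂ)/24) * h2 + ((-1:ℂ)/24) * hm2
  have he4 : a*b*c*d + a*b*c*e + a*b*d*e + a*c*d*e + b*c*d*e = 26325 := by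
    linear_combination ((-2:ℂ)/3) * h1 + ((2:ℂ)/3) * hm1 + ((1:ℂ)/12) * h2 + ((-1:ℂ)/12) * hm2
  have he5 : a*b*c*d*e = -255069 := by
    linear_combination (1:ℂ) * h0
  have hp1 : a+b+c+d+e = (-65:ℂ) := he1
  have hp2 : a^2+b^2+c^2+d^2+e^2 = (5965:ℂ) := by
    linear_combination (a+b+c+d+e) * he1 - (65:ℂ) * hp1 - (2:ℂ) * he2
  have hp3 : a^3+b^3+c^3+d^3+e^3 = (-387305:ℂ) := by
    linear_combination (a^2+b^2+c^2+d^2+e^2) * he1 - (65:ℂ) * hp2 - (a+b+c+d+e) * he2 + (870:ℂ) * hp1 + (3:ℂ) * he3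
  have hp4 : a^4+b^4+c^4+d^4+e^4 = (29024725:ℂ) := by
    linear_combination (a^3+b^3+c^3+d^3+e^3) * he1 - (65:ℂ) * hp3 - (a^2+b^2+c^2+d^2+e^2) * he2 + (870:ℂ) * hp2 + (a+b+c+d+e) * he3 + (18990:ℂ) * hp1 - (4:ℂ) * he4
  have hp5 : a^5+b^5+c^5+d^5+e^5 = (-2109851345:ℂ) := by
    linear_combination (a^4+b^4+c^4+d^4+e^4) * he1 - (65:ℂ) * hp4 - (a^3+b^3+c^3+d^3+e^3) * he2 + (870:ℂ) * hp3 + (a^2+b^2+c^2+d^2+e^2) * he3 + (18990:ℂ) * hp2 - (a+b+c+d+e) * he4 - (26325:ℂ) * hp1 + (5:ℂ) * he5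
  have hp6 : a^6+b^6+c^6+d^6+e^6 = (154896477085:ℂ) := by
    linear_combination (a^5+b^5+c^5+d^5+e^5) * he1 - (65:ℂ) * hp5 - (a^4+b^4+c^4+d^4+e^4) * he2 + (870:ℂ) * hp4 + (a^3+b^3+c^3+d^3+e^3) * he3 + (18990:ℂ) * hp3 - (a^2+b^2+c^2+d^2+e^2) * he4 - (26325:ℂ) * hp2 + (a+b+c+d+e) * he5 - (255069:ℂ) * hp1
  have hp7 : a^7+b^7+c^7+d^7+e^7 = (-11343987835385:ℂ) := by
    linear_combination (a^6+b^6+c^6+d^6+e^6) * he1 - (65:ℂ) * hp6 - (a^5+b^5+c^5+d^5+e^5) * he2 + (870:ℂ) * hp5 + (a^4+b^4+c^4+d^4+e^4) * he3 + (18990:ℂ) * hp4 - (a^3+b^3+c^3+d^3+e^3) * he4 - (26325:ℂ) * hp3 + (a^2+b^2+c^2+d^2+e^2) * he5 - (255069:ℂ) * hp2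
  have hp8 : a^8+b^8+c^8+d^8+e^8 = (831387780935845:ℂ) := by
    linear_combination (a^7+b^7+c^7+d^7+e^7) * he1 - (65:ℂ) * hp7 - (a^6+b^6+c^6+d^6+e^6) * he2 + (870:ℂ) * hp6 + (a^5+b^5+c^5+d^5+e^5) * he3 + (18990:ℂ) * hp5 - (a^4+b^4+c^4+d^4+e^4) * he4 - (26325:ℂ) * hp4 + (a^3+b^3+c^3+d^3+e^3) * he5 - (255069:ℂ) * hp3
  -- reduce the goal to the Vandermonde determinant squared
  have hgoal : ∏ i, ∏ j ∈ Finset.univ.filter (fun j => i < j), (r i - r j) ^ 2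
      = (Matrix.vandermonde r).det ^ 2 := by
    rw [Matrix.det_vandermonde, ← Finset.prod_pow]
    refine Finset.prod_congr rfl fun i _ => ?_
    rw [← Finset.prod_pow]
    have : Finset.univ.filter (fun j => i < j) = Finset.Ioi i := by
      ext j; simp
    rw [this]
    exact Finset.prod_congr rfl fun j _ => by ring
  have hdet : (Matrix.vandermonde r).det ^ 2
      = ((Matrix.vandermonde r).transpose * Matrix.vandermonde r).det := by
    rw [Matrix.det_mul, Matrix.det_transpose, sq]
  have hM : (Matrix.vandermonde r).transpose * Matrix.vandermonde r =
      !![5, -65, 5965, -387305, 29024725;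
         -65, 5965, -387305, 29024725, -2109851345;
         5965, -387305, 29024725, -2109851345, 154896477085;
         -387305, 29024725, -2109851345, 154896477085, -11343987835385;
         29024725, -2109851345, 154896477085, -11343987835385, 831387780935845] := by
    ext i j
    fin_cases i <;> fin_cases j <;>
      simp [Matrix.mul_apply, Matrix.vandermonde, Fin.sum_univ_five, ← ha, ← hb, ← hc, ← hd, ← he,
        show ((2:Fin 5):ℕ)=2 from rfl, show ((3:Fin 5):ℕ)=3 from rfl, show ((4:Fin 5):ℕ)=4 from rfl] <;>
      first
        | linear_combination hp1
        | linear_combination hp2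
        | linear_combination hp3
        | linear_combination hp4
        | linear_combination hp5
        | linear_combination hp6
        | linear_combination hp7
        | linear_combination hp8
  rw [hgoal, hdet, hM]
  exact det_aux5
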